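/- For every n ≥ 1, A_n + g_J(n)·I_n = ∑_{i=1}^{n-1} J₂(i)·E_i, where g_J(n) = ∑_{k=1}^{n-1} J₂(k) and J₂ is the Jordan totient function; consequently A_n + g_J(n)·I_n admits an integer completely positive factorization. The key identity used is ∑_{d | k} J₂(d) = k² for every positive integer k. -/

import Mathlib

open ArithmeticFunction Finset
open scoped ArithmeticFunction.zeta

noncomputable def gfun : ArithmeticFunction ℝ :=
  ⟨fun k => (k : ℝ) ^ 2 * ∏ p ∈ k.primeFactors, (1 - 1 / (p : ℝ) ^ 2), by simp⟩

lemma gfun_apply (k : ℕ) : gfun k = (k : ℝ) ^ 2 * ∏ p ∈ k.primeFactors, (1 - 1 / (p : ℝ) ^ 2) := rfl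

lemma gfun_mult : gfun.IsMultiplicative := by
  refine ⟨by simp [gfun_apply], ?_⟩
  intro m n h
  rcases eq_or_ne m 0 with rfl | hm
  · simp [gfun_apply]
  rcases eq_or_ne n 0 with rfl | hn
  · simp [gfun_apply]
  rw [gfun_apply, gfun_apply, gfun_apply, Nat.primeFactors_mul hm hn,
    Finset.prod_union (Nat.Coprime.disjoint_primeFactors h)]
  push_cast
  ring

lemma gfun_prime_pow {p : ℕ} (hp : p.Prime) (e : ℕ) (he : e ≠ 0) :
    gfun (p ^ e) = (p : ℝ) ^ (2 * e) - (p : ℝ) ^ (2 * e - 2) := by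
  have hp0 : (p : ℝ) ≠ 0 := Nat.cast_ne_zero.mpr hp.pos.ne'
  rw [gfun_apply, Nat.primeFactors_prime_pow he hp, Finset.prod_singleton]
  have h : (p : ℝ) ^ (2 * e) = (p : ℝ) ^ (2 * e - 2) * (p : ℝ) ^ 2 := by
    rw [← pow_add]; congr 1; omega
  have hcast : ((p ^ e : ℕ) : ℝ) ^ 2 = (p : ℝ) ^ (2 * e) := by
    push_cast; rw [← pow_mul, Nat.mul_comm e 2]
  rw [hcast, mul_sub, mul_one]
  congr 1
  rw [h]
  field_simp

lemma gfun_sum_divisors (k : ℕ) : ∑ d ∈ k.divisors, gfun d = (k : ℝ) ^ 2 := by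
  have key : (gfun * ζ : ArithmeticFunction ℝ) = ((pow 2 : ArithmeticFunction ℕ) : ArithmeticFunction ℝ) := by
    rw [ArithmeticFunction.IsMultiplicative.eq_iff_eq_on_prime_powers _
      (gfun_mult.mul isMultiplicative_zeta.natCast) _
      isMultiplicative_pow.natCast]
    intro p e hp
    rw [coe_mul_zeta_apply, Nat.sum_divisors_prime_pow hp, Finset.sum_range_succ']
    have hp0 : (p : ℝ) ≠ 0 := Nat.cast_ne_zero.mpr hp.pos.ne'
    have : ∀ j, gfun (p ^ (j + 1)) = (p:ℝ) ^ (2 * (j+1)) - (p:ℝ) ^ (2 * j) := by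
      intro j
      rw [gfun_prime_pow hp (j+1) (by omega)]
      congr 2
    simp only [this]
    rw [Finset.sum_range_sub (fun j => (p:ℝ) ^ (2 * j))]
    simp only [pow_zero, gfun_apply, Nat.primeFactors_one]
    simp [natCoe_apply, pow_apply, pow_mul, mul_comm]
  rcases eq_or_ne k 0 with rfl | hk
  · simp
  have := congrArg (fun f : ArithmeticFunction ℝ => f k) key
  simp only [coe_mul_zeta_apply] at this
  rw [this]
  simp [natCoe_apply, pow_apply, hk]

noncomputable def J2i : ArithmeticFunction ℤ := ArithmeticFunction.moebius * ↑(pow 2)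

lemma J2i_sum (k : ℕ) (hk : k ≠ 0) : ∑ d ∈ k.divisors, J2i d = (k : ℤ) ^ 2 := by
  have key : (J2i * ζ : ArithmeticFunction ℤ) = ((pow 2 : ArithmeticFunction ℕ) : ArithmeticFunction ℤ) := by
    rw [J2i, mul_right_comm, moebius_mul_coe_zeta, one_mul]
  have := congrArg (fun f : ArithmeticFunction ℤ => f k) key
  simp only [coe_mul_zeta_apply] at this
  rw [this]
  simp [natCoe_apply, pow_apply, hk]

lemma J2i_eq_gfun : ∀ k : ℕ, k ≠ 0 → (J2i k : ℝ) = gfun k := by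
  intro k
  induction k using Nat.strong_induction_on with
  | _ k ih =>
    intro hk
    have h1 : ∑ d ∈ k.divisors, ((J2i d : ℝ)) = (k : ℝ) ^ 2 := by
      rw [← Int.cast_sum, J2i_sum k hk]; push_cast; ring
    have h2 := gfun_sum_divisors k
    have hins : k.divisors = insert k k.properDivisors := (Nat.insert_self_properDivisors hk).symm
    have hnm : k ∉ k.properDivisors := fun h => absurd (Nat.mem_properDivisors.mp h).2 (lt_irrefl k)
    rw [hins, Finset.sum_insert hnm] at h1 h2
    have h3 : ∑ d ∈ k.properDivisors, ((J2i d : ℝ)) = ∑ d ∈ k.properDivisors, gfun d := by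
      apply Finset.sum_congr rfl
      intro d hd
      exact ih d ((Nat.mem_properDivisors.mp hd).2) (Nat.pos_of_mem_properDivisors hd).ne'
    have := h1.trans h2.symm
    rw [h3] at this
    linarith

lemma gfun_nonneg (k : ℕ) : 0 ≤ gfun k := by
  rw [gfun_apply]
  apply mul_nonneg (by positivity)
  apply Finset.prod_nonneg
  intro p hp
  have hp2 : 2 ≤ p := (Nat.prime_of_mem_primeFactors hp).two_le
  have : (1:ℝ) / (p:ℝ)^2 ≤ 1 := by
    rw [div_le_one (by positivity)]
    have : (2:ℝ) ≤ (p:ℝ) := by exact_mod_cast hp2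
    nlinarith
  linarith

noncomputable def J2n (k : ℕ) : ℕ := (J2i k).toNat

lemma J2n_cast (k : ℕ) (hk : k ≠ 0) : ((J2n k : ℝ)) = gfun k := by
  have h0 : 0 ≤ J2i k := by
    have := J2i_eq_gfun k hk
    have h := gfun_nonneg k
    exact_mod_cast this ▸ h
  rw [J2n]
  rw [← J2i_eq_gfun k hk]
  exact_mod_cast congrArg (fun z : ℤ => (z : ℝ)) (Int.toNat_of_nonneg h0)

lemma J2n_sum (k : ℕ) (hk : k ≠ 0) : ∑ d ∈ k.divisors, J2n d = k ^ 2 := by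
  have : ((∑ d ∈ k.divisors, J2n d : ℕ) : ℝ) = ((k ^ 2 : ℕ) : ℝ) := by
    push_cast
    rw [Finset.sum_congr rfl (fun d hd => J2n_cast d (Nat.pos_of_mem_divisors hd).ne')]
    rw [gfun_sum_divisors]
  exact_mod_cast this

lemma Jpow {n : ℕ} (J : Matrix (Fin n) (Fin n) ℝ)
    (hJ : ∀ i j : Fin n, J i j = if i.val + 1 = j.val then 1 else 0) :
    ∀ (m : ℕ) (a b : Fin n), (J ^ m) a b = if a.val + m = b.val then 1 else 0 := by
  intro m
  induction m with
  | zero =>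
    intro a b
    simp [Matrix.one_apply, Fin.ext_iff]
  | succ m ih =>
    intro a b
    rw [pow_succ, Matrix.mul_apply]
    simp only [ih, hJ]
    by_cases hab : a.val + (m + 1) = b.val
    · have hc : a.val + m < n := by omega
      rw [Finset.sum_eq_single (⟨a.val + m, hc⟩ : Fin n)]
      · have h2 : a.val + m + 1 = b.val := by omega
        simp [h2, hab]
      · intro c _ hne
        rw [if_neg (fun h => hne (Fin.ext h.symm)), zero_mul]
      · intro h; exact absurd (Finset.mem_univ _) h
    · rw [if_neg hab]
      apply Finset.sum_eq_zero
      intro c _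
      by_cases h1 : a.val + m = c.val
      · rw [if_neg (show ¬(c.val + 1 = b.val) by omega), mul_zero]
      · rw [if_neg h1, zero_mul]

lemma filt_divisors (n d : ℕ) (hd1 : 1 ≤ d) (hd2 : d ≤ n - 1) :
    (Finset.Icc 1 (n-1)).filter (· ∣ d) = d.divisors := by
  ext i
  rw [Finset.mem_filter, Finset.mem_Icc, Nat.mem_divisors]
  constructor
  · rintro ⟨⟨h1, h2⟩, hdvd⟩; exact ⟨hdvd, by omega⟩
  · rintro ⟨hdvd, -⟩
    refine ⟨⟨Nat.pos_of_dvd_of_pos hdvd (by omega), le_trans (Nat.le_of_dvd (by omega) hdvd) hd2⟩, hdvd⟩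

lemma sumlem (n : ℕ) (J2 : ℕ → ℝ)
    (hsum : ∀ k : ℕ, 1 ≤ k → ∑ d ∈ k.divisors, J2 d = (k : ℝ) ^ 2)
    (d : ℕ) (hd1 : 1 ≤ d) (hd2 : d ≤ n - 1) :
    ∑ i ∈ Finset.Icc 1 (n-1), J2 i * (∑ k ∈ Finset.Icc 1 (n-1), if k * i = d then (1:ℝ) else 0)
      = (d : ℝ) ^ 2 := by
  have inner : ∀ i ∈ Finset.Icc 1 (n-1),
      (∑ k ∈ Finset.Icc 1 (n-1), if k * i = d then (1:ℝ) else 0) = if i ∣ d then 1 else 0 := by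
    intro i hi
    obtain ⟨hi1, hi2⟩ := Finset.mem_Icc.mp hi
    by_cases hdvd : i ∣ d
    · rw [if_pos hdvd]
      rw [Finset.sum_eq_single (d / i)]
      · rw [if_pos (Nat.div_mul_cancel hdvd)]
      · intro k _ hne
        rw [if_neg]
        intro h
        exact hne (by rw [← h, Nat.mul_div_cancel _ (by omega)])
      · intro h
        exfalso
        apply h
        rw [Finset.mem_Icc]
        have h1 : 1 ≤ d / i := (Nat.one_le_div_iff (by omega)).mpr (Nat.le_of_dvd (by omega) hdvd)
        have h2 : d / i ≤ d := Nat.div_le_self d i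
        omega
    · rw [if_neg hdvd]
      apply Finset.sum_eq_zero
      intro k _
      rw [if_neg]
      intro h
      exact hdvd ⟨k, by rw [← h]; ring⟩
  rw [Finset.sum_congr rfl (fun i hi => by rw [inner i hi])]
  simp_rw [mul_ite, mul_one, mul_zero]
  rw [← Finset.sum_filter, filt_divisors n d hd1 hd2, hsum d hd1]

lemma resid_sum (i x y : ℕ) (hi : 0 < i) :
    ∑ r : Fin i, (if x % i = r.val then (1:ℝ) else 0) * (if y % i = r.val then 1 else 0)
      = if x % i = y % i then 1 else 0 := by
  by_cases h : x % i = y % i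
  · rw [if_pos h]
    rw [Finset.sum_eq_single (⟨x % i, Nat.mod_lt _ hi⟩ : Fin i)]
    · rw [if_pos rfl, if_pos h.symm, mul_one]
    · intro r _ hne
      rw [if_neg (fun hc => hne (Fin.ext hc.symm)), zero_mul]
    · intro h'; exact absurd (Finset.mem_univ _) h'
  · rw [if_neg h]
    apply Finset.sum_eq_zero
    intro r _
    by_cases h1 : x % i = r.val
    · rw [if_neg (show ¬(y % i = r.val) from fun hc => h (h1.trans hc.symm)), mul_zero]
    · rw [if_neg h1, zero_mul]

lemma part3_off (n x y : ℕ) (hxy : x < y) (hy : y ≤ n - 1) :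
    ∑ j ∈ Finset.Icc 1 (n-1), (J2n j : ℝ) * (if x % j = y % j then 1 else 0)
      = ((y : ℝ) - (x : ℝ)) ^ 2 := by
  obtain ⟨d, hd⟩ : ∃ d, d = y - x := ⟨_, rfl⟩
  have hdvd : ∀ j ∈ Finset.Icc 1 (n-1),
      (if x % j = y % j then (1:ℝ) else 0) = if j ∣ d then 1 else 0 := by
    intro j hj
    have hm : x % j = y % j ↔ j ∣ d := hd ▸ Nat.modEq_iff_dvd' hxy.le
    exact if_congr hm rfl rfl
  rw [Finset.sum_congr rfl (fun j hj => by rw [hdvd j hj])]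
  simp_rw [mul_ite, mul_one, mul_zero]
  rw [← Finset.sum_filter, filt_divisors n d (by omega) (by omega)]
  have : ∑ j ∈ d.divisors, ((J2n j : ℝ)) = ((d ^ 2 : ℕ) : ℝ) := by
    rw [← Nat.cast_sum, J2n_sum d (by omega)]
  rw [this]
  have : ((d : ℕ) : ℝ) = (y : ℝ) - (x : ℝ) := by
    rw [hd]; push_cast [Nat.cast_sub hxy.le]; ring
  push_cast
  rw [this]

lemma core_off (n : ℕ) (J2 : ℕ → ℝ)
    (hsum : ∀ k : ℕ, 1 ≤ k → ∑ d ∈ k.divisors, J2 d = (k : ℝ) ^ 2)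
    (x y : ℕ) (hxy : x < y) (hy : y ≤ n - 1) :
    ∑ i ∈ Finset.Icc 1 (n-1), J2 i *
      (∑ k ∈ Finset.Icc 1 (n-1), ((if x + k * i = y then (1:ℝ) else 0) + (if y + k * i = x then 1 else 0)))
      = ((y : ℝ) - (x : ℝ)) ^ 2 := by
  obtain ⟨d, hd⟩ : ∃ d, d = y - x := ⟨_, rfl⟩
  have step : ∀ i ∈ Finset.Icc 1 (n-1),
      (∑ k ∈ Finset.Icc 1 (n-1), ((if x + k * i = y then (1:ℝ) else 0) + (if y + k * i = x then 1 else 0)))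
        = ∑ k ∈ Finset.Icc 1 (n-1), (if k * i = d then (1:ℝ) else 0) := by
    intro i hi
    obtain ⟨hi1, hi2⟩ := Finset.mem_Icc.mp hi
    apply Finset.sum_congr rfl
    intro k hk
    obtain ⟨hk1, hk2⟩ := Finset.mem_Icc.mp hk
    have hki : 1 ≤ k * i := Nat.mul_pos (by omega) (by omega)
    rw [if_neg (show ¬(y + k * i = x) by omega), add_zero,
      if_congr (show x + k * i = y ↔ k * i = d by omega) rfl rfl]
  rw [Finset.sum_congr rfl (fun i hi => by rw [step i hi]), sumlem n J2 hsum d (by omega) (by omega)]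
  have : ((d : ℕ) : ℝ) = (y : ℝ) - (x : ℝ) := by
    rw [hd]; push_cast [Nat.cast_sub hxy.le]; ring
  rw [this]

lemma entry_val (n : ℕ) (x y : ℕ) :
    ∑ c : (i : Fin n) × (Fin (J2n i.val) × Fin i.val),
        ((if x % (c.1.val) = (c.2.2.val) then (1:ℝ) else 0)
          * (if y % (c.1.val) = (c.2.2.val) then 1 else 0))
      = ∑ j ∈ Finset.Icc 1 (n-1), (J2n j : ℝ) * (if x % j = y % j then 1 else 0) := by
  rw [← Finset.univ_sigma_univ, Finset.sum_sigma]
  have h1 : ∀ i : Fin n, (∑ p : Fin (J2n i.val) × Fin i.val,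
      ((if x % i.val = p.2.val then (1:ℝ) else 0) * (if y % i.val = p.2.val then 1 else 0)))
      = (J2n i.val : ℝ) * (if x % i.val = y % i.val ∧ 0 < i.val then 1 else 0) := by
    intro i
    rcases Nat.eq_zero_or_pos i.val with h | h
    · rw [h]
      simp
    · rw [Fintype.sum_prod_type]
      have : ∀ p : Fin (J2n i.val), (∑ r : Fin i.val,
          ((if x % i.val = r.val then (1:ℝ) else 0) * (if y % i.val = r.val then 1 else 0)))
          = if x % i.val = y % i.val then 1 else 0 := fun _ => resid_sum i.val x y h
      rw [Finset.sum_congr rfl (fun p _ => this p), Finset.sum_const, Finset.card_univ,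
        Fintype.card_fin, nsmul_eq_mul]
      congr 1
      exact if_congr (show (x % i.val = y % i.val) ↔ (x % i.val = y % i.val ∧ 0 < i.val) from ⟨fun hc => ⟨hc, h⟩, fun hc => hc.1⟩) rfl rfl
  have h2 : (∑ i : Fin n, ∑ p : Fin (J2n i.val) × Fin i.val,
      ((if x % i.val = p.2.val then (1:ℝ) else 0) * (if y % i.val = p.2.val then 1 else 0)))
      = ∑ i : Fin n, (J2n i.val : ℝ) * (if x % i.val = y % i.val ∧ 0 < i.val then 1 else 0) :=
    Finset.sum_congr rfl (fun i _ => h1 i)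
  rw [h2]
  rw [Fin.sum_univ_eq_sum_range (fun j => (J2n j : ℝ) * (if x % j = y % j ∧ 0 < j then 1 else 0))]
  have h3 : ∑ j ∈ Finset.range n, (J2n j : ℝ) * (if x % j = y % j ∧ 0 < j then 1 else 0)
      = ∑ j ∈ Finset.Icc 1 (n-1), (J2n j : ℝ) * (if x % j = y % j ∧ 0 < j then 1 else 0) := by
    rcases Nat.eq_zero_or_pos n with hn | hn
    · rw [hn]; simp
    have hsplit : Finset.range n = insert 0 (Finset.Icc 1 (n-1)) := by
      ext j
      simp only [Finset.mem_range, Finset.mem_insert, Finset.mem_Icc]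
      omega
    rw [hsplit, Finset.sum_insert (by simp [Finset.mem_Icc])]
    norm_num
  rw [h3]
  apply Finset.sum_congr rfl
  intro j hj
  obtain ⟨hj1, hj2⟩ := Finset.mem_Icc.mp hj
  exact congrArg _ (if_congr (show (x % j = y % j ∧ 0 < j) ↔ (x % j = y % j) from ⟨fun hc => hc.1, fun hc => ⟨hc, by omega⟩⟩) rfl rfl)

open Matrix

theorem stmt_19 (n : ℕ) (hn : 1 ≤ n)
    (A : Matrix (Fin n) (Fin n) ℝ)
    (hA : ∀ i j : Fin n, A i j = ((j.val : ℝ) - (i.val : ℝ)) ^ 2)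
    (J : Matrix (Fin n) (Fin n) ℝ)
    (hJ : ∀ i j : Fin n, J i j = if i.val + 1 = j.val then 1 else 0)
    (J2 : ℕ → ℝ)
    (hJ2 : ∀ k : ℕ, J2 k = (k : ℝ) ^ 2 * ∏ p ∈ k.primeFactors, (1 - 1 / (p : ℝ) ^ 2))
    (E : ℕ → Matrix (Fin n) (Fin n) ℝ)
    (hE : ∀ i : ℕ, E i = 1 + ∑ k ∈ Finset.Icc 1 (n - 1), (J ^ (k * i) + (Jᵀ) ^ (k * i)))
    (gJ : ℝ) (hgJ : gJ = ∑ k ∈ Finset.Icc 1 (n - 1), J2 k) :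
    (∀ k : ℕ, 1 ≤ k → ∑ d ∈ k.divisors, J2 d = (k : ℝ) ^ 2) ∧
    (A + gJ • (1 : Matrix (Fin n) (Fin n) ℝ) = ∑ i ∈ Finset.Icc 1 (n - 1), J2 i • E i) ∧
    (∃ (m : ℕ) (U : Matrix (Fin n) (Fin m) ℕ),
      A + gJ • (1 : Matrix (Fin n) (Fin n) ℝ)
        = (U.map (fun x : ℕ => (x : ℝ))) * (U.map (fun x : ℕ => (x : ℝ)))ᵀ) := by
  have hJg : ∀ k, J2 k = gfun k := fun k => (hJ2 k).trans (gfun_apply k).symm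
  have hsum : ∀ k : ℕ, 1 ≤ k → ∑ d ∈ k.divisors, J2 d = (k : ℝ) ^ 2 := by
    intro k hk
    rw [Finset.sum_congr rfl (fun d _ => hJg d), gfun_sum_divisors]
  have hP := Jpow J hJ
  refine ⟨hsum, ?_, ?_⟩
  · ext a b
    rw [Matrix.add_apply, Matrix.smul_apply, Matrix.one_apply, smul_eq_mul, Matrix.sum_apply]
    have hterm : ∀ i ∈ Finset.Icc 1 (n-1), (J2 i • E i) a b =
        J2 i * ((if a = b then (1:ℝ) else 0) +
          ∑ k ∈ Finset.Icc 1 (n-1), ((if a.val + k * i = b.val then (1:ℝ) else 0)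
            + (if b.val + k * i = a.val then 1 else 0))) := by
      intro i _
      rw [Matrix.smul_apply, smul_eq_mul, hE, Matrix.add_apply, Matrix.one_apply, Matrix.sum_apply]
      congr 2
      apply Finset.sum_congr rfl
      intro k _
      rw [Matrix.add_apply, ← Matrix.transpose_pow, Matrix.transpose_apply, hP, hP]
    rw [Finset.sum_congr rfl hterm]
    rcases lt_trichotomy a.val b.val with hab | hab | hab
    · have hne : a ≠ b := fun h => by rw [h] at hab; exact lt_irrefl _ hab
      have hs1 : ∑ i ∈ Finset.Icc 1 (n-1), (J2 i * ((if a = b then (1:ℝ) else 0) +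
          ∑ k ∈ Finset.Icc 1 (n-1), ((if a.val + k * i = b.val then (1:ℝ) else 0)
            + (if b.val + k * i = a.val then 1 else 0))))
          = ∑ i ∈ Finset.Icc 1 (n-1), J2 i *
          (∑ k ∈ Finset.Icc 1 (n-1), ((if a.val + k * i = b.val then (1:ℝ) else 0)
            + (if b.val + k * i = a.val then 1 else 0))) :=
        Finset.sum_congr rfl (fun i _ => by rw [if_neg hne, zero_add])
      rw [hs1, hA, if_neg hne, mul_zero, add_zero,
        core_off n J2 hsum a.val b.val hab (by omega)]
    · have heq : a = b := Fin.ext hab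
      have hzero : ∀ i ∈ Finset.Icc 1 (n-1),
          ∑ k ∈ Finset.Icc 1 (n-1), ((if a.val + k * i = b.val then (1:ℝ) else 0)
            + (if b.val + k * i = a.val then 1 else 0)) = 0 := by
        intro i hi
        obtain ⟨hi1, hi2⟩ := Finset.mem_Icc.mp hi
        apply Finset.sum_eq_zero
        intro k hk
        obtain ⟨hk1, hk2⟩ := Finset.mem_Icc.mp hk
        have hki : 1 ≤ k * i := Nat.mul_pos (by omega) (by omega)
        rw [if_neg (by omega), if_neg (by omega), add_zero]
      have hs1 : ∑ i ∈ Finset.Icc 1 (n-1), (J2 i * ((if a = b then (1:ℝ) else 0) +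
          ∑ k ∈ Finset.Icc 1 (n-1), ((if a.val + k * i = b.val then (1:ℝ) else 0)
            + (if b.val + k * i = a.val then 1 else 0))))
          = ∑ i ∈ Finset.Icc 1 (n-1), J2 i :=
        Finset.sum_congr rfl (fun i hi => by rw [hzero i hi, add_zero, if_pos heq, mul_one])
      rw [hs1, hA, if_pos heq, mul_one, ← hgJ]
      have h0 : ((b.val : ℝ) - (a.val : ℝ)) ^ 2 = 0 := by rw [hab]; ring
      rw [h0, zero_add]
    · have hne : a ≠ b := fun h => by rw [h] at hab; exact lt_irrefl _ hab
      have hs1 : ∑ i ∈ Finset.Icc 1 (n-1), (J2 i * ((if a = b then (1:ℝ) else 0) +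
          ∑ k ∈ Finset.Icc 1 (n-1), ((if a.val + k * i = b.val then (1:ℝ) else 0)
            + (if b.val + k * i = a.val then 1 else 0))))
          = ∑ i ∈ Finset.Icc 1 (n-1), J2 i *
          (∑ k ∈ Finset.Icc 1 (n-1), ((if b.val + k * i = a.val then (1:ℝ) else 0)
            + (if a.val + k * i = b.val then 1 else 0))) :=
        Finset.sum_congr rfl (fun i _ => by
          rw [if_neg hne, zero_add]
          exact congrArg _ (Finset.sum_congr rfl (fun k _ => add_comm _ _)))
      rw [hs1, hA, if_neg hne, mul_zero, add_zero,
        core_off n J2 hsum b.val a.val hab (by omega)]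
      ring
  · classical
    refine ⟨Fintype.card ((i : Fin n) × (Fin (J2n i.val) × Fin i.val)), Matrix.of (fun a c =>
      if a.val % (((Fintype.equivFin ((i : Fin n) × (Fin (J2n i.val) × Fin i.val))).symm c).1.val)
        = (((Fintype.equivFin ((i : Fin n) × (Fin (J2n i.val) × Fin i.val))).symm c).2.2.val)
      then 1 else 0), ?_⟩
    ext a b
    rw [Matrix.add_apply, Matrix.smul_apply, Matrix.one_apply, smul_eq_mul, Matrix.mul_apply]
    simp only [Matrix.map_apply, Matrix.transpose_apply, Matrix.of_apply, Nat.cast_ite,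
      Nat.cast_one, Nat.cast_zero]
    rw [Fintype.sum_equiv (Fintype.equivFin ((i : Fin n) × (Fin (J2n i.val) × Fin i.val))).symm _
      (fun c : (i : Fin n) × (Fin (J2n i.val) × Fin i.val) =>
        (if a.val % (c.1.val) = (c.2.2.val) then (1:ℝ) else 0)
          * (if b.val % (c.1.val) = (c.2.2.val) then 1 else 0)) (fun c => rfl)]
    rw [entry_val n a.val b.val]
    rcases lt_trichotomy a.val b.val with hab | hab | hab
    · have hne : a ≠ b := fun h => by rw [h] at hab; exact lt_irrefl _ hab
      rw [hA, if_neg hne, mul_zero, add_zero, part3_off n a.val b.val hab (by omega)]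
    · have heq : a = b := Fin.ext hab
      have hs1 : ∑ j ∈ Finset.Icc 1 (n-1), (J2n j : ℝ) * (if a.val % j = b.val % j then 1 else 0)
          = ∑ j ∈ Finset.Icc 1 (n-1), J2 j := by
        apply Finset.sum_congr rfl
        intro j hj
        obtain ⟨hj1, hj2⟩ := Finset.mem_Icc.mp hj
        rw [if_pos (by rw [hab]), mul_one, J2n_cast j (by omega), ← hJg j]
      rw [hA, if_pos heq, mul_one, hs1, ← hgJ]
      have h0 : ((b.val : ℝ) - (a.val : ℝ)) ^ 2 = 0 := by rw [hab]; ring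
      rw [h0, zero_add]
    · have hne : a ≠ b := fun h => by rw [h] at hab; exact lt_irrefl _ hab
      have hs1 : ∑ j ∈ Finset.Icc 1 (n-1), (J2n j : ℝ) * (if a.val % j = b.val % j then 1 else 0)
          = ∑ j ∈ Finset.Icc 1 (n-1), (J2n j : ℝ) * (if b.val % j = a.val % j then 1 else 0) :=
        Finset.sum_congr rfl (fun j _ => congrArg _ (if_congr eq_comm rfl rfl))
      rw [hA, if_neg hne, mul_zero, add_zero, hs1, part3_off n b.val a.val hab (by omega)]
      ring
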